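/- Let $x$ be a binomial random variable with $n$ trials and success probability $p$, and let $d$ be a positive integer. Then $\mathbb{E}\left[\frac{x!}{(x+d)!}\right] \leq \frac{n!}{(n+d)! \, p^d}$. -/
import Mathlib

open Finset

lemma nat_key (n d i : ℕ) (hi : i ≤ n) :
    n.choose i * i.factorial * (n + d).factorial
      = n.factorial * ((n + d).choose (i + d) * (i + d).factorial) := by
  apply Nat.eq_of_mul_eq_mul_right (Nat.factorial_pos (n - i))
  have h1 := Nat.choose_mul_factorial_mul_factorial hi
  have h2 := Nat.choose_mul_factorial_mul_factorial (Nat.add_le_add_right hi d)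
  have hnd : n + d - (i + d) = n - i := by omega
  rw [hnd] at h2
  calc n.choose i * i.factorial * (n + d).factorial * (n - i).factorial
      = (n.choose i * i.factorial * (n - i).factorial) * (n + d).factorial := by ring
    _ = n.factorial * (n + d).factorial := by rw [h1]
    _ = n.factorial * ((n+d).choose (i+d) * (i+d).factorial * (n-i).factorial) := by rw [h2]
    _ = n.factorial * ((n + d).choose (i + d) * (i + d).factorial) * (n - i).factorial := by ring

theorem binomial_factorial_ratio_moment (n : ℕ) (p : ℝ) (hp : 0 < p) (hp1 : p ≤ 1)
    (d : ℕ) (hd : 0 < d) :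
    ∑ i ∈ Finset.range (n + 1),
      (n.choose i : ℝ) * p ^ i * (1 - p) ^ (n - i) *
        ((Nat.factorial i : ℝ) / (Nat.factorial (i + d) : ℝ))
      ≤ (Nat.factorial n : ℝ) / ((Nat.factorial (n + d) : ℝ) * p ^ d) := by
  have h1p : (0:ℝ) ≤ 1 - p := by linarith
  have hpos : (0:ℝ) < (Nat.factorial (n + d) : ℝ) * p ^ d := by positivity
  rw [le_div_iff₀ hpos, Finset.sum_mul]
  have key : ∀ i ∈ Finset.range (n+1),
      (n.choose i : ℝ) * p ^ i * (1 - p) ^ (n - i) *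
        ((Nat.factorial i : ℝ) / (Nat.factorial (i + d) : ℝ)) *
        ((Nat.factorial (n + d) : ℝ) * p ^ d)
      = (Nat.factorial n : ℝ) *
          (((n+d).choose (i+d) : ℝ) * p ^ (i+d) * (1-p) ^ ((n+d)-(i+d))) := by
    intro i hi
    have hi' : i ≤ n := Nat.lt_succ_iff.mp (Finset.mem_range.mp hi)
    have hnd : n + d - (i + d) = n - i := by omega
    have hfi : ((i+d).factorial : ℝ) ≠ 0 := by positivity
    have hcast : (n.choose i : ℝ) * (i.factorial : ℝ) * ((n+d).factorial : ℝ)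
        = (n.factorial : ℝ) * (((n+d).choose (i+d) : ℝ) * ((i+d).factorial : ℝ)) := by
      exact_mod_cast nat_key n d i hi'
    rw [hnd]
    field_simp
    linear_combination (p ^ i * p ^ d * (1 - p) ^ (n - i)) * hcast
  rw [Finset.sum_congr rfl key, ← Finset.mul_sum]
  have hsum : ∑ i ∈ Finset.range (n+1),
      ((n+d).choose (i+d) : ℝ) * p ^ (i+d) * (1-p) ^ ((n+d)-(i+d)) ≤ 1 := by
    have h1 : ∑ i ∈ Finset.range (n+1),
        ((n+d).choose (i+d) : ℝ) * p ^ (i+d) * (1-p) ^ ((n+d)-(i+d))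
        = ∑ j ∈ Finset.Ico d (n+1+d),
            ((n+d).choose j : ℝ) * p ^ j * (1-p) ^ ((n+d)-j) := by
      rw [Finset.sum_Ico_eq_sum_range]
      simp only [Nat.add_sub_cancel]
      refine Finset.sum_congr rfl fun i _ => ?_
      rw [Nat.add_comm d i]
    rw [h1]
    have h2 : ∑ j ∈ Finset.Ico d (n+1+d),
        ((n+d).choose j : ℝ) * p ^ j * (1-p) ^ ((n+d)-j)
        ≤ ∑ j ∈ Finset.range (n+d+1),
            ((n+d).choose j : ℝ) * p ^ j * (1-p) ^ ((n+d)-j) := by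
      apply Finset.sum_le_sum_of_subset_of_nonneg
      · intro x hx
        simp only [Finset.mem_Ico, Finset.mem_range] at *
        omega
      · intro j _ _
        have : (0:ℝ) ≤ (1-p)^((n+d)-j) := pow_nonneg h1p _
        positivity
    refine h2.trans ?_
    have := add_pow p (1-p) (n+d)
    simp only [add_sub_cancel, one_pow] at this
    rw [show ∑ j ∈ Finset.range (n+d+1),
        ((n+d).choose j : ℝ) * p ^ j * (1-p) ^ ((n+d)-j)
      = ∑ j ∈ Finset.range (n+d+1), p ^ j * (1-p) ^ ((n+d)-j) * ((n+d).choose j : ℝ)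
      from Finset.sum_congr rfl fun j _ => by ring]
    rw [← this]
  calc (Nat.factorial n : ℝ) * ∑ i ∈ Finset.range (n+1),
        ((n+d).choose (i+d) : ℝ) * p ^ (i+d) * (1-p) ^ ((n+d)-(i+d))
      ≤ (Nat.factorial n : ℝ) * 1 := by
        apply mul_le_mul_of_nonneg_left hsum (by positivity)
    _ = (Nat.factorial n : ℝ) := mul_one _
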